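/- arXiv:1409.3345 — 2 statements merged into one kernel-verified Lean document; each statement's English description precedes it below -/
import Mathlib

section
/- Two sampled symbols a, a' : Z/2NZ × Z/2NZ → C yield the same Weyl matrix Op(a) = Op(a') if and only if Δ(a) = Δ(a'), where Δ(a)_{j,k} = a(j,k) + (-1)^k a(j+N,k) + (-1)^j a(j,k+N) + (-1)^{j+k+N} a(j+N,k+N) for j,k = 0,...,N-1. -/
open scoped BigOperators
open Complex

noncomputable section

instance nz2N (N : ℕ) [NeZero N] : NeZero (2 * N) :=
  ⟨Nat.mul_ne_zero two_ne_zero (NeZero.ne N)⟩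
/-- Discrete Fourier transform in the second variable of a sampled symbol. -/
def F2 (N : ℕ) [NeZero N] (a : ZMod (2 * N) → ZMod (2 * N) → ℂ) (m r : ZMod (2 * N)) : ℂ :=
  ∑ k : ZMod (2 * N),
    a m k * Complex.exp (-2 * (Real.pi : ℂ) * Complex.I * (r.val : ℂ) * (k.val : ℂ) / (2 * N : ℂ))

/-- The Weyl matrix of a sampled symbol, given by its matrix elements
`(Op a)_{n,j} = (1/(2N)) [F₂a(j+n, j-n) + F₂a(j+n+N, j-n+N)]` (arguments mod 2N). -/
def OpW (N : ℕ) [NeZero N] (a : ZMod (2 * N) → ZMod (2 * N) → ℂ) :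
    Matrix (ZMod N) (ZMod N) ℂ :=
  fun n j =>
    (1 / (2 * N : ℂ)) *
      (F2 N a ((j.val : ZMod (2 * N)) + (n.val : ZMod (2 * N)))
          ((j.val : ZMod (2 * N)) - (n.val : ZMod (2 * N))) +
       F2 N a ((j.val : ZMod (2 * N)) + (n.val : ZMod (2 * N)) + (N : ZMod (2 * N)))
          ((j.val : ZMod (2 * N)) - (n.val : ZMod (2 * N)) + (N : ZMod (2 * N))))
/-- The map `Δ` sending a `2N × 2N` sampled symbol to an `N × N` matrix. -/
def Delta (N : ℕ) [NeZero N] (a : ZMod (2 * N) → ZMod (2 * N) → ℂ) :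
    Matrix (ZMod N) (ZMod N) ℂ :=
  fun j k =>
    a ((j.val : ZMod (2 * N))) ((k.val : ZMod (2 * N))) +
    (-1 : ℂ) ^ k.val * a ((j.val : ZMod (2 * N)) + (N : ZMod (2 * N))) ((k.val : ZMod (2 * N))) +
    (-1 : ℂ) ^ j.val * a ((j.val : ZMod (2 * N))) ((k.val : ZMod (2 * N)) + (N : ZMod (2 * N))) +
    (-1 : ℂ) ^ (j.val + k.val + N) *
      a ((j.val : ZMod (2 * N)) + (N : ZMod (2 * N))) ((k.val : ZMod (2 * N)) + (N : ZMod (2 * N)))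

namespace Aux8


/-- basic exponential -/
def ee (N : ℕ) (t : ℤ) : ℂ := Complex.exp (-Real.pi * Complex.I * t / N)

variable (N : ℕ) [NeZero N]

lemma Ncne : (N : ℂ) ≠ 0 := Nat.cast_ne_zero.2 (NeZero.ne N)

lemma ee_add (s t : ℤ) : ee N (s + t) = ee N s * ee N t := by
  rw [ee, ee, ee, ← Complex.exp_add]
  congr 1
  push_cast
  ring

lemma ee_zero : ee N 0 = 1 := by simp [ee]

lemma ee_period (t m : ℤ) : ee N (t + 2 * N * m) = ee N t := by
  rw [ee_add]
  have : ee N (2 * N * m) = 1 := by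
    rw [ee, show (-Real.pi * Complex.I * ((2 * N * m : ℤ) : ℂ) / N) = ((-m : ℤ) : ℂ) * (2 * Real.pi * Complex.I) by
      push_cast; field_simp [Ncne N]]
    exact Complex.exp_int_mul_two_pi_mul_I _
  rw [this, mul_one]

lemma ee_N_mul (r : ℤ) : ee N ((N : ℤ) * r) = (-1 : ℂ) ^ r := by
  rw [ee, show (-Real.pi * Complex.I * (((N : ℤ) * r : ℤ) : ℂ) / N) = (r : ℂ) * (-(Real.pi * Complex.I)) by
    push_cast; field_simp [Ncne N]]
  rw [Complex.exp_int_mul]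
  congr 1
  rw [Complex.exp_neg, Complex.exp_pi_mul_I]
  norm_num

lemma ee_N_mul_nat (k : ℕ) : ee N ((N : ℤ) * k) = (-1 : ℂ) ^ k := by
  rw [ee_N_mul, zpow_natCast]

lemma ee_nat_mul (t : ℕ) (z : ℤ) : ee N ((t : ℤ) * z) = (ee N z) ^ t := by
  rw [ee, ee, ← Complex.exp_nat_mul]
  congr 1
  push_cast
  ring

lemma neg_one_pow_mod2 (a : ℕ) : ((-1 : ℂ)) ^ a = (-1) ^ (a % 2) := by
  conv_lhs => rw [← Nat.div_add_mod a 2]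
  rw [pow_add, pow_mul]
  norm_num

lemma neg_one_pow_congr {a b : ℕ} (h : a % 2 = b % 2) : ((-1 : ℂ)) ^ a = (-1) ^ b := by
  rw [neg_one_pow_mod2 a, neg_one_pow_mod2 b, h]

lemma val_pow_natCast (s : ℕ) : ((-1 : ℂ)) ^ ((s : ZMod (2 * N)).val) = (-1) ^ s := by
  apply neg_one_pow_congr
  rw [ZMod.val_natCast]
  exact Nat.mod_mod_of_dvd s ⟨N, rfl⟩

lemma val_add_pow (x y : ZMod (2 * N)) :
    ((-1 : ℂ)) ^ ((x + y).val) = (-1) ^ x.val * (-1) ^ y.val := by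
  rw [← pow_add]
  apply neg_one_pow_congr
  rw [ZMod.val_add]
  exact Nat.mod_mod_of_dvd _ ⟨N, rfl⟩

lemma valN : ((N : ZMod (2 * N)).val) = N :=
  ZMod.val_natCast_of_lt (by have := NeZero.ne N; omega)

lemma NN : (N : ZMod (2 * N)) + N = 0 := by
  rw [← Nat.cast_add, show N + N = 2 * N by ring, ZMod.natCast_self]

lemma zpow_sub_nat (p q : ℕ) : ((-1 : ℂ)) ^ ((p : ℤ) - (q : ℤ)) = (-1) ^ (p + q) := by
  have h : ((-1 : ℂ) ^ q)⁻¹ = (-1) ^ q := by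
    rw [inv_eq_of_mul_eq_one_right]
    rw [← pow_add]
    exact Even.neg_one_pow ⟨q, by ring⟩
  rw [zpow_sub₀ (by norm_num : (-1 : ℂ) ≠ 0), zpow_natCast, zpow_natCast, div_eq_mul_inv, h, pow_add]

lemma sum_zmod (f : ZMod (2 * N) → ℂ) :
    ∑ k : ZMod (2 * N), f k = ∑ i ∈ Finset.range (2 * N), f (i : ZMod (2 * N)) := by
  refine Finset.sum_bij' (fun (k : ZMod (2 * N)) _ => k.val)
    (fun (i : ℕ) _ => (i : ZMod (2 * N))) ?_ ?_ ?_ ?_ ?_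
  · intro k _; exact Finset.mem_range.2 (ZMod.val_lt k)
  · intro i _; exact Finset.mem_univ _
  · intro k _; simp [ZMod.natCast_val, ZMod.cast_id]
  · intro i hi; exact ZMod.val_natCast_of_lt (Finset.mem_range.1 hi)
  · intro k _; simp [ZMod.natCast_val, ZMod.cast_id]



section Core
variable (N : ℕ) [NeZero N] (b : ZMod (2 * N) → ZMod (2 * N) → ℂ)

def cc (m k : ZMod (2 * N)) : ℂ := b m k + (-1 : ℂ) ^ k.val * b (m + N) k

def DD (m k : ZMod (2 * N)) : ℂ := cc N b m k + (-1 : ℂ) ^ m.val * cc N b m (k + N)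

lemma sq_neg_one (a : ℕ) : ((-1 : ℂ)) ^ a * (-1) ^ a = 1 := by
  rw [← pow_add]; exact Even.neg_one_pow ⟨a, by ring⟩

lemma cc_shift (m k : ZMod (2 * N)) : cc N b (m + N) k = (-1 : ℂ) ^ k.val * cc N b m k := by
  rw [cc, cc, add_assoc, NN N, add_zero, mul_add, ← mul_assoc, sq_neg_one, one_mul, add_comm]

lemma DD_shift1 (m k : ZMod (2 * N)) : DD N b (m + N) k = (-1 : ℂ) ^ k.val * DD N b m k := by
  rw [DD, DD, cc_shift, cc_shift, val_add_pow, valN, val_add_pow, valN]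
  linear_combination ((-1 : ℂ) ^ m.val * (-1 : ℂ) ^ k.val * cc N b m (k + N)) * sq_neg_one N

lemma DD_shift2 (m k : ZMod (2 * N)) : DD N b m (k + N) = (-1 : ℂ) ^ m.val * DD N b m k := by
  rw [DD, DD, add_assoc, NN N, add_zero, mul_add, ← mul_assoc, sq_neg_one, one_mul, add_comm]

lemma F2_ee (m : ZMod (2 * N)) (z : ℤ) :
    F2 N b m ((z : ZMod (2 * N))) = ∑ k : ZMod (2 * N), b m k * ee N (z * k.val) := by
  rw [F2]
  refine Finset.sum_congr rfl fun k _ => ?_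
  congr 1
  have h1 : Complex.exp (-2 * (Real.pi : ℂ) * Complex.I * (((z : ZMod (2 * N)).val : ℕ) : ℂ) * (k.val : ℂ) / (2 * N : ℂ))
      = ee N ((((z : ZMod (2 * N)).val : ℕ) : ℤ) * k.val) := by
    rw [ee]; congr 1; push_cast; field_simp [Ncne N]
  rw [h1]
  have h2 : (((z : ZMod (2 * N)).val : ℕ) : ℤ) = z % (2 * N) := by
    have := ZMod.val_intCast (n := 2 * N) z
    push_cast at this ⊢
    omega
  rw [h2, Int.emod_def, show ((z - 2 * N * (z / (2 * N))) * k.val) = z * k.val + 2 * N * (-(z / (2 * N)) * k.val) by push_cast; ring, ee_period]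

lemma fold (m : ZMod (2 * N)) (r : ℤ) (hpar : ee N ((N : ℤ) * r) = (-1 : ℂ) ^ m.val) :
    ∑ k : ZMod (2 * N), ee N (r * k.val) * cc N b m k
      = ∑ k ∈ Finset.range N, ee N (r * k) * DD N b m (k : ZMod (2 * N)) := by
  rw [sum_zmod, show Finset.range (2 * N) = Finset.range (N + N) from by rw [two_mul],
    Finset.sum_range_add, ← Finset.sum_add_distrib]
  refine Finset.sum_congr rfl fun i hi => ?_
  have hiN := Finset.mem_range.1 hi
  have hv1 : ((i : ZMod (2 * N))).val = i := ZMod.val_natCast_of_lt (by omega)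
  have hv2 : (((N + i : ℕ) : ZMod (2 * N))).val = N + i := ZMod.val_natCast_of_lt (by omega)
  have hc : ((N + i : ℕ) : ZMod (2 * N)) = (i : ZMod (2 * N)) + N := by push_cast; ring
  rw [hv1, hv2, hc, DD]
  have he : ee N (r * ((N + i : ℕ) : ℤ)) = (-1 : ℂ) ^ m.val * ee N (r * i) := by
    rw [show (r * ((N + i : ℕ) : ℤ)) = (N : ℤ) * r + r * i by push_cast; ring, ee_add, hpar]
  rw [he]
  ring

end Core

section Main
variable (N : ℕ) [NeZero N] (b : ZMod (2 * N) → ZMod (2 * N) → ℂ)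

def SS (m : ZMod (2 * N)) (r : ℤ) : ℂ :=
  ∑ k ∈ Finset.range N, ee N (r * k) * DD N b m (k : ZMod (2 * N))

lemma T_formula (n j : ZMod N) :
    F2 N b ((j.val : ZMod (2 * N)) + (n.val : ZMod (2 * N)))
        ((j.val : ZMod (2 * N)) - (n.val : ZMod (2 * N))) +
      F2 N b ((j.val : ZMod (2 * N)) + (n.val : ZMod (2 * N)) + (N : ZMod (2 * N)))
        ((j.val : ZMod (2 * N)) - (n.val : ZMod (2 * N)) + (N : ZMod (2 * N)))
      = SS N b (((j.val + n.val : ℕ) : ZMod (2 * N))) ((j.val : ℤ) - (n.val : ℤ)) := by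
  set r : ℤ := (j.val : ℤ) - (n.val : ℤ) with hrdef
  have hm : (j.val : ZMod (2 * N)) + (n.val : ZMod (2 * N)) = ((j.val + n.val : ℕ) : ZMod (2 * N)) := by
    push_cast; ring
  have hr1 : (j.val : ZMod (2 * N)) - (n.val : ZMod (2 * N)) = ((r : ℤ) : ZMod (2 * N)) := by
    rw [hrdef]; push_cast; ring
  have hr2 : (j.val : ZMod (2 * N)) - (n.val : ZMod (2 * N)) + (N : ZMod (2 * N))
      = (((r + N : ℤ)) : ZMod (2 * N)) := by
    rw [hrdef]; push_cast; ring
  rw [hr2, hr1, hm, F2_ee, F2_ee, SS, ← fold N b _ r ?hpar]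
  case hpar =>
    rw [ee_N_mul, hrdef, zpow_sub_nat, val_pow_natCast]
  rw [← Finset.sum_add_distrib]
  refine Finset.sum_congr rfl fun k _ => ?_
  rw [cc, show ((r + N) * (k.val : ℤ)) = r * k.val + (N : ℤ) * k.val by ring, ee_add,
    ee_N_mul_nat]
  ring

lemma SS_period (m : ZMod (2 * N)) (r : ℤ) : SS N b m (r + 2 * N) = SS N b m r := by
  rw [SS, SS]
  refine Finset.sum_congr rfl fun k _ => ?_
  rw [show ((r + 2 * N) * (k : ℤ)) = r * k + 2 * N * k by ring, ee_period]

lemma SS_shift (m : ZMod (2 * N)) (r : ℤ) : SS N b m (r + N) = SS N b (m + N) r := by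
  rw [SS, SS]
  refine Finset.sum_congr rfl fun k hk => ?_
  have hkN := Finset.mem_range.1 hk
  have hv : ((k : ZMod (2 * N))).val = k := ZMod.val_natCast_of_lt (by omega)
  rw [DD_shift1, hv, show ((r + N) * (k : ℤ)) = r * k + (N : ℤ) * k by ring, ee_add, ee_N_mul_nat]
  ring

lemma geom (d : ℤ) (hd : ¬ ((N : ℤ) ∣ d)) :
    ∑ t ∈ Finset.range N, (ee N (-2 * d)) ^ t = 0 := by
  have hx1 : ee N (-2 * d) ≠ 1 := by
    intro h
    rw [ee] at h
    obtain ⟨q, hq⟩ := Complex.exp_eq_one_iff.1 h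
    apply hd
    refine ⟨q, ?_⟩
    have hC : (d : ℂ) = (N : ℂ) * q := by
      rw [div_eq_iff (Ncne N)] at hq
      push_cast at hq
      have h2 : ((d : ℂ) - (N : ℂ) * q) * (2 * Real.pi * Complex.I) = 0 := by
        linear_combination hq
      rcases mul_eq_zero.1 h2 with h3 | h3
      · exact sub_eq_zero.1 h3
      · exact absurd h3 (by
          refine mul_ne_zero (mul_ne_zero two_ne_zero ?_) Complex.I_ne_zero
          simpa using Real.pi_ne_zero)
    exact_mod_cast hC
  have hxN : (ee N (-2 * d)) ^ N = 1 := by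
    rw [ee, ← Complex.exp_nat_mul, show ((N : ℂ) * (-Real.pi * Complex.I * ((-2 * d : ℤ) : ℂ) / N)) = (d : ℤ) * (2 * Real.pi * Complex.I) by push_cast; field_simp [Ncne N]]
    exact Complex.exp_int_mul_two_pi_mul_I d
  rw [geom_sum_eq hx1, hxN, sub_self, zero_div]

end Main

section Inv
variable (N : ℕ) [NeZero N] (b : ZMod (2 * N) → ZMod (2 * N) → ℂ)

lemma key_inversion (J K : ZMod N) :
    ∑ t ∈ Finset.range N,
        ee N (-((J.val : ℤ) - 2 * t) * K.val) * SS N b ((J.val : ℕ) : ZMod (2 * N)) ((J.val : ℤ) - 2 * t)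
      = (N : ℂ) * DD N b ((J.val : ℕ) : ZMod (2 * N)) ((K.val : ℕ) : ZMod (2 * N)) := by
  have hK : K.val < N := ZMod.val_lt K
  have step1 : ∀ t : ℕ, ee N (-((J.val : ℤ) - 2 * t) * K.val) * SS N b ((J.val : ℕ) : ZMod (2 * N)) ((J.val : ℤ) - 2 * t)
      = ∑ k ∈ Finset.range N, DD N b ((J.val : ℕ) : ZMod (2 * N)) ((k : ℕ) : ZMod (2 * N)) *
          (ee N ((J.val : ℤ) * ((k : ℤ) - K.val)) * (ee N (-2 * ((k : ℤ) - K.val))) ^ t) := by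
    intro t
    rw [SS, Finset.mul_sum]
    refine Finset.sum_congr rfl fun k _ => ?_
    rw [show (ee N (-((J.val : ℤ) - 2 * t) * K.val) * (ee N (((J.val : ℤ) - 2 * t) * k) * DD N b ((J.val : ℕ) : ZMod (2 * N)) ((k : ℕ) : ZMod (2 * N))))
      = (ee N (-((J.val : ℤ) - 2 * t) * K.val) * ee N (((J.val : ℤ) - 2 * t) * k)) * DD N b ((J.val : ℕ) : ZMod (2 * N)) ((k : ℕ) : ZMod (2 * N)) by ring,
      ← ee_add]
    rw [show (-((J.val : ℤ) - 2 * t) * K.val + ((J.val : ℤ) - 2 * t) * k)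
      = (J.val : ℤ) * ((k : ℤ) - K.val) + (t : ℤ) * (-2 * ((k : ℤ) - K.val)) by push_cast; ring,
      ee_add, ee_nat_mul N t]
    ring
  calc ∑ t ∈ Finset.range N, ee N (-((J.val : ℤ) - 2 * t) * K.val) * SS N b ((J.val : ℕ) : ZMod (2 * N)) ((J.val : ℤ) - 2 * t)
      = ∑ t ∈ Finset.range N, ∑ k ∈ Finset.range N,
          DD N b ((J.val : ℕ) : ZMod (2 * N)) ((k : ℕ) : ZMod (2 * N)) *
            (ee N ((J.val : ℤ) * ((k : ℤ) - K.val)) * (ee N (-2 * ((k : ℤ) - K.val))) ^ t) := by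
        exact Finset.sum_congr rfl fun t _ => step1 t
    _ = ∑ k ∈ Finset.range N,
          DD N b ((J.val : ℕ) : ZMod (2 * N)) ((k : ℕ) : ZMod (2 * N)) *
            (ee N ((J.val : ℤ) * ((k : ℤ) - K.val)) * ∑ t ∈ Finset.range N, (ee N (-2 * ((k : ℤ) - K.val))) ^ t) := by
        rw [Finset.sum_comm]
        simp only [Finset.mul_sum]
    _ = (N : ℂ) * DD N b ((J.val : ℕ) : ZMod (2 * N)) ((K.val : ℕ) : ZMod (2 * N)) := by
        rw [Finset.sum_eq_single_of_mem K.val (Finset.mem_range.2 hK)]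
        · rw [sub_self, mul_zero, ee_zero, show (-2 : ℤ) * 0 = 0 by ring, ee_zero]
          simp
          ring
        · intro k hk hne
          have hkN := Finset.mem_range.1 hk
          have hdvd : ¬ ((N : ℤ) ∣ ((k : ℤ) - K.val)) := by
            intro hdvd
            have h0 := Int.eq_zero_of_abs_lt_dvd hdvd (abs_lt.2 ⟨by omega, by omega⟩)
            omega
          rw [geom N _ hdvd, mul_zero, mul_zero]

lemma forward (H : ∀ n j : ZMod N,
      SS N b (((j.val + n.val : ℕ) : ZMod (2 * N))) ((j.val : ℤ) - (n.val : ℤ)) = 0) :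
    ∀ J K : ZMod N, DD N b ((J.val : ℕ) : ZMod (2 * N)) ((K.val : ℕ) : ZMod (2 * N)) = 0 := by
  intro J K
  have hJ : J.val < N := ZMod.val_lt J
  have hS : ∀ t ∈ Finset.range N, SS N b ((J.val : ℕ) : ZMod (2 * N)) ((J.val : ℤ) - 2 * t) = 0 := by
    intro t ht
    have htN := Finset.mem_range.1 ht
    by_cases hle : t ≤ J.val
    · have h := H (t : ZMod N) ((J.val - t : ℕ) : ZMod N)
      rw [ZMod.val_natCast_of_lt htN, ZMod.val_natCast_of_lt (show J.val - t < N by omega)] at h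
      rw [show J.val - t + t = J.val by omega] at h
      rwa [show ((J.val - t : ℕ) : ℤ) - (t : ℤ) = (J.val : ℤ) - 2 * t by omega] at h
    · push_neg at hle
      have h := H (t : ZMod N) ((J.val + N - t : ℕ) : ZMod N)
      rw [ZMod.val_natCast_of_lt htN, ZMod.val_natCast_of_lt (show J.val + N - t < N by omega)] at h
      rw [show J.val + N - t + t = J.val + N by omega] at h
      rw [show ((J.val + N - t : ℕ) : ℤ) - (t : ℤ) = ((J.val : ℤ) + N - 2 * t) by omega] at h
      have p1 : SS N b ((J.val : ℕ) : ZMod (2 * N)) ((J.val : ℤ) - 2 * t)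
          = SS N b ((J.val : ℕ) : ZMod (2 * N)) (((J.val : ℤ) + N - 2 * t) + N) := by
        rw [show ((J.val : ℤ) + N - 2 * t) + N = ((J.val : ℤ) - 2 * t) + 2 * N by ring, SS_period]
      rw [p1, SS_shift, show ((J.val : ℕ) : ZMod (2 * N)) + (N : ZMod (2 * N)) = ((J.val + N : ℕ) : ZMod (2 * N)) by push_cast; ring]
      exact h
  have h0 : ∑ t ∈ Finset.range N,
      ee N (-((J.val : ℤ) - 2 * t) * K.val) * SS N b ((J.val : ℕ) : ZMod (2 * N)) ((J.val : ℤ) - 2 * t) = 0 :=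
    Finset.sum_eq_zero fun t ht => by rw [hS t ht, mul_zero]
  rw [key_inversion] at h0
  exact (mul_eq_zero.1 h0).resolve_left (Ncne N)

lemma Delta_eq_DD (J K : ZMod N) :
    Delta N b J K = DD N b ((J.val : ℕ) : ZMod (2 * N)) ((K.val : ℕ) : ZMod (2 * N)) := by
  have hJ : J.val < N := ZMod.val_lt J
  have hK : K.val < N := ZMod.val_lt K
  have := NeZero.ne N
  simp only [Delta, DD, cc]
  rw [ZMod.val_natCast_of_lt (show J.val < 2 * N by omega),
    ZMod.val_natCast_of_lt (show K.val < 2 * N by omega),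
    val_add_pow, valN, ZMod.val_natCast_of_lt (show K.val < 2 * N by omega),
    pow_add, pow_add]
  ring

lemma DD_of_Delta (h : ∀ J K : ZMod N, Delta N b J K = 0) :
    ∀ (m : ZMod (2 * N)) (k : ℕ), k < N → DD N b m ((k : ℕ) : ZMod (2 * N)) = 0 := by
  have base : ∀ s kk : ℕ, s < N → kk < N →
      DD N b ((s : ℕ) : ZMod (2 * N)) ((kk : ℕ) : ZMod (2 * N)) = 0 := by
    intro s kk hs hkk
    have h1 := h (s : ZMod N) (kk : ZMod N)
    rw [Delta_eq_DD, ZMod.val_natCast_of_lt hs, ZMod.val_natCast_of_lt hkk] at h1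
    exact h1
  intro m k hk
  have hmv : m.val < 2 * N := ZMod.val_lt m
  have hmc : ((m.val : ℕ) : ZMod (2 * N)) = m := by simp [ZMod.natCast_val, ZMod.cast_id]
  by_cases hm : m.val < N
  · rw [← hmc]; exact base m.val k hm hk
  · push_neg at hm
    have h1 : m = ((m.val - N : ℕ) : ZMod (2 * N)) + (N : ZMod (2 * N)) := by
      conv_lhs => rw [← hmc, show m.val = (m.val - N) + N by omega]
      push_cast; ring
    rw [h1, DD_shift1, base (m.val - N) k (by omega) hk, mul_zero]

end Inv
end Aux8

open Aux8 in
/-- two sampled symbols yield the same Weyl matrix iff `Δ` agrees on them. -/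
theorem opW_eq_iff_delta_eq (N : ℕ) [NeZero N] (a a' : ZMod (2 * N) → ZMod (2 * N) → ℂ) :
    OpW N a = OpW N a' ↔ Delta N a = Delta N a' := by
  set b : ZMod (2 * N) → ZMod (2 * N) → ℂ := fun m k => a m k - a' m k with hb
  have hF2 : ∀ m r, F2 N b m r = F2 N a m r - F2 N a' m r := by
    intro m r
    rw [F2, F2, F2, ← Finset.sum_sub_distrib]
    exact Finset.sum_congr rfl fun k _ => by simp only [hb]; ring
  have hDelta : ∀ J K : ZMod N, Delta N b J K = Delta N a J K - Delta N a' J K := by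
    intro J K
    simp only [Delta, hb]
    ring
  have c2N : (2 * (N : ℂ)) ≠ 0 := mul_ne_zero two_ne_zero (Ncne N)
  constructor
  · intro hOp
    have HT : ∀ n j : ZMod N,
        SS N b (((j.val + n.val : ℕ) : ZMod (2 * N))) ((j.val : ℤ) - (n.val : ℤ)) = 0 := by
      intro n j
      have h1 := congrFun (congrFun hOp n) j
      simp only [OpW] at h1
      have h2 := mul_left_cancel₀ (one_div_ne_zero c2N) h1
      have h3 := T_formula N b n j
      rw [hF2, hF2] at h3
      rw [← h3]
      linear_combination h2
    funext J K
    have hD := forward N b HT J K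
    rw [← Delta_eq_DD] at hD
    rw [hDelta] at hD
    exact sub_eq_zero.1 hD
  · intro hΔ
    have h0 : ∀ J K : ZMod N, Delta N b J K = 0 := fun J K => by
      rw [hDelta, hΔ, sub_self]
    have hDD := DD_of_Delta N b h0
    funext n j
    show OpW N a n j = OpW N a' n j
    simp only [OpW]
    congr 1
    have h3 := T_formula N b n j
    rw [hF2, hF2] at h3
    have hz : SS N b (((j.val + n.val : ℕ) : ZMod (2 * N))) ((j.val : ℤ) - (n.val : ℤ)) = 0 := by
      rw [SS]
      exact Finset.sum_eq_zero fun k hk => by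
        rw [hDD _ k (Finset.mem_range.1 hk), mul_zero]
    rw [hz] at h3
    linear_combination h3
end
end

section
/- Dequantization inverts quantization: for any N×N complex matrix A, define its discrete Wigner transform W̃(A)(r,s) = (1/(2N)) Σ_{l=0}^{N-1} A_{l, r-l mod N} exp(-πi(2l - r)s/N) for r,s ∈ Z/2NZ. Then the sampled symbol a(r,s) := N·W̃(A)(r,s) satisfies Op(a) = A, where (Op(a))_{n,j} = (1/(2N))[F₂a(j+n, j-n) + F₂a(j+n+N, j-n+N)] and F₂a(m,r) = Σ_{k=0}^{2N-1} a(m,k) exp(-2πi r k/(2N)). -/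
open scoped BigOperators
open Complex

noncomputable section

/-- The discrete Wigner transform of an `N × N` matrix. -/
def WtMat (N : ℕ) [NeZero N] (A : Matrix (ZMod N) (ZMod N) ℂ) (r s : ZMod (2 * N)) : ℂ :=
  (1 / (2 * N : ℂ)) * ∑ l : ZMod N,
    A l (ZMod.castHom (dvd_mul_left N 2) (ZMod N) r - l) *
      Complex.exp (-(Real.pi : ℂ) * Complex.I *
        ((2 * (l.val : ℤ) - (r.val : ℤ) : ℤ) : ℂ) * (s.val : ℂ) / (N : ℂ))

lemma sum_range_exp (M : ℕ) (hM : M ≠ 0) (c : ℤ) :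
    ∑ k ∈ Finset.range M,
        Complex.exp (2 * (Real.pi : ℂ) * Complex.I * (c : ℂ) * (k : ℂ) / (M : ℂ))
      = if (M : ℤ) ∣ c then (M : ℂ) else 0 := by
  have hMC : (M : ℂ) ≠ 0 := Nat.cast_ne_zero.mpr hM
  have h2 : (2 * (Real.pi : ℂ) * Complex.I) ≠ 0 := by
    simp [Real.pi_ne_zero, Complex.I_ne_zero]
  set ζ : ℂ := Complex.exp (2 * (Real.pi : ℂ) * Complex.I * (c : ℂ) / (M : ℂ)) with hζ
  have hpow : ∀ k : ℕ,
      Complex.exp (2 * (Real.pi : ℂ) * Complex.I * (c : ℂ) * (k : ℂ) / (M : ℂ)) = ζ ^ k := by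
    intro k
    rw [hζ, ← Complex.exp_nat_mul]
    ring_nf
  have hζone : ζ = 1 ↔ (M : ℤ) ∣ c := by
    rw [hζ, Complex.exp_eq_one_iff]
    constructor
    · rintro ⟨n, hn⟩
      have h1 : 2 * (Real.pi : ℂ) * Complex.I * (c : ℂ) / (M : ℂ) * (M : ℂ)
          = (n : ℂ) * (2 * (Real.pi : ℂ) * Complex.I) * (M : ℂ) := by rw [hn]
      rw [div_mul_cancel₀ _ hMC] at h1
      have h' : (c : ℂ) * (2 * (Real.pi : ℂ) * Complex.I)
          = ((n * M : ℤ) : ℂ) * (2 * (Real.pi : ℂ) * Complex.I) := by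
        push_cast
        linear_combination h1
      have := mul_right_cancel₀ h2 h'
      have hc : c = n * M := by exact_mod_cast this
      exact ⟨n, by rw [hc]; ring⟩
    · rintro ⟨d, rfl⟩
      refine ⟨d, ?_⟩
      push_cast
      field_simp
  by_cases h : (M : ℤ) ∣ c
  · simp only [hpow, hζone.mpr h, one_pow, Finset.sum_const, Finset.card_range, nsmul_eq_mul,
      mul_one, if_pos h]
  · have hne : ζ ≠ 1 := fun h1 => h (hζone.mp h1)
    have hM1 : ζ ^ M = 1 := by
      rw [hζ, ← Complex.exp_nat_mul]
      have he : (M : ℂ) * (2 * (Real.pi : ℂ) * Complex.I * (c : ℂ) / (M : ℂ))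
          = (c : ℂ) * (2 * (Real.pi : ℂ) * Complex.I) := by
        field_simp
      rw [he]
      exact Complex.exp_int_mul_two_pi_mul_I c
    simp only [hpow]
    rw [geom_sum_eq hne, hM1, sub_self, zero_div, if_neg h]

lemma sum_zmod_exp (M : ℕ) [NeZero M] (c : ℤ) :
    ∑ k : ZMod M,
        Complex.exp (2 * (Real.pi : ℂ) * Complex.I * (c : ℂ) * (k.val : ℂ) / (M : ℂ))
      = if (M : ℤ) ∣ c then (M : ℂ) else 0 := by
  rw [← sum_range_exp M (NeZero.ne M) c]
  refine Finset.sum_nbij' (fun k => k.val) (fun i => (i : ZMod M)) ?_ ?_ ?_ ?_ ?_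
  · intro a _; exact Finset.mem_range.mpr (ZMod.val_lt a)
  · intro a _; exact Finset.mem_univ _
  · intro a _; simp [ZMod.natCast_val, ZMod.cast_id]
  · intro a ha; exact ZMod.val_cast_of_lt (Finset.mem_range.mp ha)
  · intro a _; rfl

lemma F2_eval (N : ℕ) [NeZero N] (A : Matrix (ZMod N) (ZMod N) ℂ) (m r : ZMod (2 * N)) :
    F2 N (fun r s => (N : ℂ) * WtMat N A r s) m r
      = (N : ℂ) * ∑ l : ZMod N,
          if ((2 * N : ℕ) : ℤ) ∣ ((m.val : ℤ) - 2 * (l.val : ℤ) - (r.val : ℤ))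
          then A l (ZMod.castHom (dvd_mul_left N 2) (ZMod N) m - l) else 0 := by
  have hN : (N : ℂ) ≠ 0 := Nat.cast_ne_zero.mpr (NeZero.ne N)
  have h2N : (2 * N : ℂ) ≠ 0 := by
    simp [hN]
  unfold F2 WtMat
  simp only [Finset.mul_sum, Finset.sum_mul]
  rw [Finset.sum_comm]
  refine Finset.sum_congr rfl fun l _ => ?_
  have key : ∀ k : ZMod (2 * N),
      (N : ℂ) * ((1 / (2 * N : ℂ)) *
        (A l (ZMod.castHom (dvd_mul_left N 2) (ZMod N) m - l) *
          Complex.exp (-(Real.pi : ℂ) * Complex.I *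
            ((2 * (l.val : ℤ) - (m.val : ℤ) : ℤ) : ℂ) * (k.val : ℂ) / (N : ℂ)))) *
        Complex.exp (-2 * (Real.pi : ℂ) * Complex.I * (r.val : ℂ) * (k.val : ℂ) / (2 * N : ℂ))
      = (1 / 2 : ℂ) * (A l (ZMod.castHom (dvd_mul_left N 2) (ZMod N) m - l) *
          Complex.exp (2 * (Real.pi : ℂ) * Complex.I *
            (((m.val : ℤ) - 2 * (l.val : ℤ) - (r.val : ℤ) : ℤ) : ℂ) * (k.val : ℂ) / (2 * N : ℂ))) := by
    intro k
    have hexp :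
        Complex.exp (-(Real.pi : ℂ) * Complex.I *
            ((2 * (l.val : ℤ) - (m.val : ℤ) : ℤ) : ℂ) * (k.val : ℂ) / (N : ℂ)) *
          Complex.exp (-2 * (Real.pi : ℂ) * Complex.I * (r.val : ℂ) * (k.val : ℂ) / (2 * N : ℂ))
        = Complex.exp (2 * (Real.pi : ℂ) * Complex.I *
            (((m.val : ℤ) - 2 * (l.val : ℤ) - (r.val : ℤ) : ℤ) : ℂ) * (k.val : ℂ) / (2 * N : ℂ)) := by
      rw [← Complex.exp_add]
      congr 1
      push_cast
      field_simp
      ring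
    calc (N : ℂ) * ((1 / (2 * N : ℂ)) *
        (A l (ZMod.castHom (dvd_mul_left N 2) (ZMod N) m - l) *
          Complex.exp (-(Real.pi : ℂ) * Complex.I *
            ((2 * (l.val : ℤ) - (m.val : ℤ) : ℤ) : ℂ) * (k.val : ℂ) / (N : ℂ)))) *
        Complex.exp (-2 * (Real.pi : ℂ) * Complex.I * (r.val : ℂ) * (k.val : ℂ) / (2 * N : ℂ))
        = ((N : ℂ) * (1 / (2 * N : ℂ))) *
            (A l (ZMod.castHom (dvd_mul_left N 2) (ZMod N) m - l) *
              (Complex.exp (-(Real.pi : ℂ) * Complex.I *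
                ((2 * (l.val : ℤ) - (m.val : ℤ) : ℤ) : ℂ) * (k.val : ℂ) / (N : ℂ)) *
               Complex.exp (-2 * (Real.pi : ℂ) * Complex.I * (r.val : ℂ) * (k.val : ℂ) / (2 * N : ℂ)))) := by
          ring
      _ = _ := by
          rw [hexp]
          have : (N : ℂ) * (1 / (2 * N : ℂ)) = 1 / 2 := by
            field_simp
          rw [this]
  simp only [key]
  rw [← Finset.mul_sum, ← Finset.mul_sum]
  have hs := sum_zmod_exp (2 * N) ((m.val : ℤ) - 2 * (l.val : ℤ) - (r.val : ℤ))
  simp only [Nat.cast_mul, Nat.cast_ofNat] at hs ⊢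
  rw [hs]
  split_ifs with h
  · ring
  · simp

lemma cond_iff (N : ℕ) [NeZero N] (n l : ZMod N) (m r : ZMod (2 * N))
    (hmr : m - r = ((2 * n.val : ℕ) : ZMod (2 * N))) :
    ((2 * N : ℕ) : ℤ) ∣ ((m.val : ℤ) - 2 * (l.val : ℤ) - (r.val : ℤ)) ↔ l = n := by
  rw [← ZMod.intCast_zmod_eq_zero_iff_dvd]
  push_cast
  rw [ZMod.natCast_rightInverse m, ZMod.natCast_rightInverse r,
    show m - 2 * ((l.val : ℕ) : ZMod (2 * N)) - r
        = (m - r) - ((2 * l.val : ℕ) : ZMod (2 * N)) by push_cast; ring,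
    hmr, sub_eq_zero, eq_comm, ZMod.natCast_eq_natCast_iff]
  have hn := ZMod.val_lt n
  have hl := ZMod.val_lt l
  unfold Nat.ModEq
  rw [Nat.mod_eq_of_lt (by omega), Nat.mod_eq_of_lt (by omega)]
  constructor
  · intro h
    exact ZMod.val_injective N (by omega)
  · rintro rfl; rfl

/-- dequantization inverts quantization: the sampled symbol
`a(r,s) = N · W̃(A)(r,s)` has Weyl matrix `A`. -/
theorem dequantization (N : ℕ) [NeZero N] (A : Matrix (ZMod N) (ZMod N) ℂ) :
    OpW N (fun r s => (N : ℂ) * WtMat N A r s) = A := by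
  funext n j
  have hN : (N : ℂ) ≠ 0 := Nat.cast_ne_zero.mpr (NeZero.ne N)
  show OpW N _ n j = A n j
  unfold OpW
  rw [F2_eval, F2_eval]
  have hdown : ∀ x : ZMod N,
      ZMod.castHom (dvd_mul_left N 2) (ZMod N) ((x.val : ZMod (2 * N))) = x := fun x => by
    rw [map_natCast]
    exact ZMod.natCast_rightInverse x
  have hsum : ∀ (m r : ZMod (2 * N)), m - r = ((2 * n.val : ℕ) : ZMod (2 * N)) →
      (∑ l : ZMod N, if ((2 * N : ℕ) : ℤ) ∣ ((m.val : ℤ) - 2 * (l.val : ℤ) - (r.val : ℤ))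
          then A l (ZMod.castHom (dvd_mul_left N 2) (ZMod N) m - l) else 0)
        = A n (ZMod.castHom (dvd_mul_left N 2) (ZMod N) m - n) := by
    intro m r hmr
    rw [Finset.sum_congr rfl (fun l _ =>
      if_congr (cond_iff N n l m r hmr) rfl rfl), Finset.sum_ite_eq' Finset.univ n
      (fun l => A l (ZMod.castHom (dvd_mul_left N 2) (ZMod N) m - l))]
    simp
  rw [hsum _ _ (by push_cast; ring), hsum _ _ (by push_cast; ring)]
  have hc1 : ZMod.castHom (dvd_mul_left N 2) (ZMod N)
      ((j.val : ZMod (2 * N)) + (n.val : ZMod (2 * N))) - n = j := by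
    rw [map_add, hdown, hdown]
    ring
  have hc2 : ZMod.castHom (dvd_mul_left N 2) (ZMod N)
      ((j.val : ZMod (2 * N)) + (n.val : ZMod (2 * N)) + (N : ZMod (2 * N))) - n = j := by
    rw [map_add, map_add, hdown, hdown, map_natCast, ZMod.natCast_self]
    ring
  rw [hc1, hc2]
  field_simp
  ring
end
end
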